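/- Let 𝒮 be as above with 𝒯(𝒮) ≠ ∅, and let w ∈ 𝒯(𝒮). Then there exists an N-star transport y between P(w,𝒮) and P₁,…,P_N with c(y) = c(w,𝒮). -/
import Mathlib


open MeasureTheory ENNReal

noncomputable section

/-- Euclidean space `ℝ^d`. -/
abbrev Euc (d : ℕ) := EuclideanSpace ℝ (Fin d)

/-- The (topological) support of a measure on `ℝ^d`: the set of points all of whose
neighborhoods have positive measure. -/
def msupp {d : ℕ} (μ : MeasureTheory.Measure (Euc d)) : Set (Euc d) :=
  {x | ∀ U ∈ nhds x, μ U ≠ 0}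

/-- A discrete probability measure: a probability measure with finite support. -/
def IsDiscreteProb {d : ℕ} (μ : MeasureTheory.Measure (Euc d)) : Prop :=
  IsProbabilityMeasure μ ∧ (msupp μ).Finite

/-- Finite second moment. -/
def FinSecondMoment {d : ℕ} (μ : MeasureTheory.Measure (Euc d)) : Prop :=
  ∫⁻ x, (‖x‖₊ : ℝ≥0∞) ^ 2 ∂μ < ⊤

/-- A coupling of `P` and `Q`: a measure on the product whose first marginal is `P`
and second marginal is `Q`. -/
def IsCoupling {d : ℕ} (γ : MeasureTheory.Measure (Euc d × Euc d))
    (P Q : MeasureTheory.Measure (Euc d)) : Prop :=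
  γ.map Prod.fst = P ∧ γ.map Prod.snd = Q

/-- Squared 2-Wasserstein distance: infimum of the quadratic transport cost over couplings. -/
def W2sq {d : ℕ} (P Q : MeasureTheory.Measure (Euc d)) : ℝ≥0∞ :=
  ⨅ γ ∈ {γ | IsCoupling γ P Q}, ∫⁻ p, (‖p.1 - p.2‖₊ : ℝ≥0∞) ^ 2 ∂γ

/-- A barycenter of `P 0, …, P (N-1)`: a probability measure with finite second moment
minimizing the sum of squared Wasserstein distances over all such measures. -/
def IsBarycenter {d N : ℕ} (P : Fin N → MeasureTheory.Measure (Euc d))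
    (Pbar : MeasureTheory.Measure (Euc d)) : Prop :=
  IsProbabilityMeasure Pbar ∧ FinSecondMoment Pbar ∧
    ∀ Q : MeasureTheory.Measure (Euc d), IsProbabilityMeasure Q → FinSecondMoment Q →
      ∑ i, W2sq Pbar (P i) ≤ ∑ i, W2sq Q (P i)

/-- A multi-coupling of `P 0, …, P (N-1)`: a probability measure on `(ℝ^d)^N` whose
`i`-th coordinate marginal is `P i`. -/
def IsMultiCoupling {d N : ℕ} (π : MeasureTheory.Measure (Fin N → Euc d))
    (P : Fin N → MeasureTheory.Measure (Euc d)) : Prop :=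
  IsProbabilityMeasure π ∧ ∀ i, π.map (fun x => x i) = P i

/-- The averaging map `(x₁, …, x_N) ↦ (x₁ + ⋯ + x_N)/N`. -/
def avgMap (d N : ℕ) : (Fin N → Euc d) → Euc d := fun x => (N : ℝ)⁻¹ • ∑ i, x i

/-- The set `S` of all centroids of support points, one from each measure. -/
def centroidSet {d N : ℕ} (P : Fin N → MeasureTheory.Measure (Euc d)) : Set (Euc d) :=
  {s | ∃ x : Fin N → Euc d, (∀ i, x i ∈ msupp (P i)) ∧ s = (N : ℝ)⁻¹ • ∑ i, x i}

open scoped Classical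

/-- The location-fixed transportation scheme `𝒯(𝒮)` for the ordered tuple family
`s_h = (q0 h, q h 1, …, q h N)`: nonnegative weights `w` such that for each `i` and each
support point `k` of `Pᵢ`, the total weight of tuples whose `i`-th entry is `k` equals the
mass `Pᵢ({k})`. -/
def schemeT {d N m : ℕ} (P : Fin N → MeasureTheory.Measure (Euc d))
    (suppF : Fin N → Finset (Euc d))
    (q0 : Fin m → Euc d) (q : Fin m → Fin N → Euc d) : Set (Fin m → ℝ) :=
  {w | (∀ h, 0 ≤ w h) ∧
    ∀ i, ∀ k ∈ suppF i,
      ∑ h ∈ Finset.univ.filter (fun h => q h i = k), w h = (P i {k}).toReal}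

/-- The measure `P(w, 𝒮) = Σ_h w_h δ_{q_{h0}}` associated with a weight vector `w`. -/
def schemeMeasure {d m : ℕ} (q0 : Fin m → Euc d) (w : Fin m → ℝ) :
    MeasureTheory.Measure (Euc d) :=
  ∑ h, ENNReal.ofReal (w h) • MeasureTheory.Measure.dirac (q0 h)

/-- The cost `c(w, 𝒮) = Σ_h w_h Σᵢ ‖q_{h0} - q_{hi}‖²`. -/
def schemeCost {d N m : ℕ} (q0 : Fin m → Euc d) (q : Fin m → Fin N → Euc d)
    (w : Fin m → ℝ) : ℝ :=
  ∑ h, w h * ∑ i, ‖q0 h - q h i‖ ^ 2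

/-- An `N`-star transport between a measure `Q` (supported in the finite set `JF`, with mass
`Q({j})` at `j`) and `P₁, …, P_N`: nonnegative `y i j k` with row sums `Σ_k y i j k = Q({j})`
and column sums `Σ_j y i j k = Pᵢ({k})`. -/
def IsNStar {d N : ℕ} (P : Fin N → MeasureTheory.Measure (Euc d))
    (suppF : Fin N → Finset (Euc d)) (Q : MeasureTheory.Measure (Euc d))
    (JF : Finset (Euc d)) (y : Fin N → Euc d → Euc d → ℝ) : Prop :=
  (∀ i j k, 0 ≤ y i j k) ∧
  (∀ i, ∀ j ∈ JF, ∑ k ∈ suppF i, y i j k = (Q {j}).toReal) ∧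
  (∀ i, ∀ k ∈ suppF i, ∑ j ∈ JF, y i j k = (P i {k}).toReal)

/-- The cost `c(y) = Σ_{i,j,k} ‖x_j - x_{ik}‖² y_{ijk}` of an `N`-star transport. -/
def nstarCost {d N : ℕ} (JF : Finset (Euc d)) (suppF : Fin N → Finset (Euc d))
    (y : Fin N → Euc d → Euc d → ℝ) : ℝ :=
  ∑ i, ∑ j ∈ JF, ∑ k ∈ suppF i, ‖j - k‖ ^ 2 * y i j k

/-- for any `w ∈ 𝒯(𝒮)` there exists an `N`-star transport `y` between
`P(w, 𝒮)` and `P₁, …, P_N` whose cost equals `c(w, 𝒮)`. -/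
theorem stmt10 {d N m : ℕ} (P : Fin N → MeasureTheory.Measure (Euc d))
    (hP : ∀ i, IsDiscreteProb (P i))
    (suppF : Fin N → Finset (Euc d)) (hsuppF : ∀ i, ↑(suppF i) = msupp (P i))
    (q0 : Fin m → Euc d) (q : Fin m → Fin N → Euc d)
    (hq0 : ∀ h, q0 h ∈ centroidSet P) (hq : ∀ h i, q h i ∈ msupp (P i))
    (w : Fin m → ℝ) (hw : w ∈ schemeT P suppF q0 q) :
    ∃ y : Fin N → Euc d → Euc d → ℝ,
      IsNStar P suppF (schemeMeasure q0 w) (Finset.univ.image q0) y ∧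
      nstarCost (Finset.univ.image q0) suppF y = schemeCost q0 q w := by
  classical
  obtain ⟨hw0, hwmarg⟩ := hw
  have hqmem : ∀ h i, q h i ∈ suppF i := by
    intro h i
    rw [← Finset.mem_coe, hsuppF i]
    exact hq h i
  -- mass of the scheme measure at a point
  have hmass : ∀ j : Euc d, ((schemeMeasure q0 w) {j}).toReal
      = ∑ h ∈ Finset.univ.filter (fun h => q0 h = j), w h := by
    intro j
    have hms : MeasurableSet ({j} : Set (Euc d)) := measurableSet_singleton j
    have h1 : (schemeMeasure q0 w) {j}
        = ∑ h : Fin m, ENNReal.ofReal (w h) * ({j} : Set (Euc d)).indicator 1 (q0 h) := by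
      rw [schemeMeasure, MeasureTheory.Measure.finset_sum_apply]
      refine Finset.sum_congr rfl fun h _ => ?_
      rw [MeasureTheory.Measure.smul_apply, MeasureTheory.Measure.dirac_apply' _ hms,
        smul_eq_mul]
    rw [h1, ENNReal.toReal_sum]
    · rw [Finset.sum_filter]
      refine Finset.sum_congr rfl fun h _ => ?_
      by_cases hj : q0 h = j
      · simp [Set.indicator, hj, ENNReal.toReal_ofReal (hw0 h)]
      · have : q0 h ∉ ({j} : Set (Euc d)) := by simpa using hj
        simp [Set.indicator_of_notMem this, hj]
    · intro h _
      by_cases hj : q0 h ∈ ({j} : Set (Euc d))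
      · simp [Set.indicator_of_mem hj]
      · simp [Set.indicator_of_notMem hj]
  refine ⟨fun i j k => ∑ h ∈ Finset.univ.filter (fun h => q0 h = j ∧ q h i = k), w h,
    ⟨?_, ?_, ?_⟩, ?_⟩
  · intro i j k
    exact Finset.sum_nonneg fun h _ => hw0 h
  · -- row sums
    intro i j _
    rw [hmass j]
    have hcoll : ∑ k ∈ suppF i, ∑ h ∈ (Finset.univ.filter (fun h => q0 h = j)).filter
        (fun h => q h i = k), w h = ∑ h ∈ Finset.univ.filter (fun h => q0 h = j), w h :=
      Finset.sum_fiberwise_of_maps_to (fun h _ => hqmem h i) w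
    rw [← hcoll]
    refine Finset.sum_congr rfl fun k _ => ?_
    congr 1
    rw [Finset.filter_filter]
  · -- column sums
    intro i k hk
    rw [← hwmarg i k hk]
    have hcoll : ∑ j ∈ Finset.univ.image q0, ∑ h ∈ (Finset.univ.filter
        (fun h => q h i = k)).filter (fun h => q0 h = j), w h
        = ∑ h ∈ Finset.univ.filter (fun h => q h i = k), w h :=
      Finset.sum_fiberwise_of_maps_to (fun h _ => Finset.mem_image_of_mem q0 (Finset.mem_univ h)) w
    rw [← hcoll]
    refine Finset.sum_congr rfl fun j _ => ?_
    apply Finset.sum_congr _ fun h _ => rfl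
    rw [Finset.filter_filter]
    ext h
    simp only [Finset.mem_filter]
    tauto
  · -- cost
    rw [nstarCost, schemeCost]
    have hrhs : ∑ h, w h * ∑ i, ‖q0 h - q h i‖ ^ 2
        = ∑ i, ∑ h, ‖q0 h - q h i‖ ^ 2 * w h := by
      rw [Finset.sum_comm]
      refine Finset.sum_congr rfl fun h _ => ?_
      rw [Finset.mul_sum]
      exact Finset.sum_congr rfl fun i _ => mul_comm _ _
    rw [hrhs]
    refine Finset.sum_congr rfl fun i _ => ?_
    have step1 : ∀ j, ∑ k ∈ suppF i, ‖j - k‖ ^ 2 *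
        ∑ h ∈ Finset.univ.filter (fun h => q0 h = j ∧ q h i = k), w h
        = ∑ k ∈ suppF i, ∑ h ∈ (Finset.univ.filter (fun h => q0 h = j)).filter
            (fun h => q h i = k), ‖q0 h - q h i‖ ^ 2 * w h := by
      intro j
      refine Finset.sum_congr rfl fun k _ => ?_
      rw [Finset.mul_sum]
      rw [show (Finset.univ.filter (fun h => q0 h = j)).filter (fun h => q h i = k)
          = Finset.univ.filter (fun h => q0 h = j ∧ q h i = k) from Finset.filter_filter _ _ _]
      refine Finset.sum_congr rfl fun h hh => ?_
      obtain ⟨hj, hk⟩ := (Finset.mem_filter.mp hh).2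
      rw [hj, hk]
    calc ∑ j ∈ Finset.univ.image q0, ∑ k ∈ suppF i, ‖j - k‖ ^ 2 *
          ∑ h ∈ Finset.univ.filter (fun h => q0 h = j ∧ q h i = k), w h
        = ∑ j ∈ Finset.univ.image q0, ∑ h ∈ Finset.univ.filter (fun h => q0 h = j),
            ‖q0 h - q h i‖ ^ 2 * w h := by
          refine Finset.sum_congr rfl fun j _ => ?_
          rw [step1 j]
          exact Finset.sum_fiberwise_of_maps_to (fun h _ => hqmem h i) _
      _ = ∑ h, ‖q0 h - q h i‖ ^ 2 * w h :=
          Finset.sum_fiberwise_of_maps_to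
            (fun h _ => Finset.mem_image_of_mem q0 (Finset.mem_univ h)) _
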